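/- arXiv:1802.02321 — 3 statements merged into one kernel-verified Lean document; each statement's English description precedes it below -/
import Mathlib

section
/- For every ρ ∈ ℂ with ρ ≠ 0, setting λ = ρ², one has for all x ∈ [a, min(2a,π)]: Y(x,λ) = sin(ρx)/ρ + Y₁(x,λ), where Y₁(x,λ) = −(cos ρ(x−a))/(2ρ²) ∫_a^x q(t) dt + (1/(2ρ²)) ∫_a^x q(t) cos ρ(x−2t+a) dt. -/
open Real Set MeasureTheory intervalIntegral Filter Asymptotics Topology

noncomputable section

/-- `y` is a (strong) solution of the delay equation `-y''(x) + q(x) y(x - a) = λ y(x)`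
on `(0, π)` (equivalently `y'' = q(x) y(x - a) - λ y`), differentiable on `[0, π]` with
continuous derivative there, and with initial conditions `y(0) = 0`, `y'(0) = 1`. -/
def IsSolution (a : ℝ) (q : ℝ → ℂ) (lam : ℂ) (y : ℝ → ℂ) : Prop :=
  (∀ x ∈ Icc (0:ℝ) π, HasDerivAt y (deriv y x) x) ∧
  (∀ x ∈ Ioo (0:ℝ) π, HasDerivAt (deriv y) (q x * y (x - a) - lam * y x) x) ∧
  ContinuousOn (deriv y) (Icc 0 π) ∧
  y 0 = 0 ∧ deriv y 0 = 1

/-- The term `Y₁(x, λ)`, where `λ = ρ²`. -/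
def Y1 (a : ℝ) (q : ℝ → ℂ) (ρ : ℂ) (x : ℝ) : ℂ :=
  -(Complex.cos (ρ * (x - a)) / (2 * ρ ^ 2)) * (∫ t in a..x, q t)
    + (1 / (2 * ρ ^ 2)) * ∫ t in a..x, q t * Complex.cos (ρ * (x - 2 * t + a))

/-- The term `Y₂(x, λ)`, where `λ = ρ²`. -/
def Y2 (a : ℝ) (q : ℝ → ℂ) (ρ : ℂ) (x : ℝ) : ℂ :=
  ∫ t in (2 * a)..x, (Complex.sin (ρ * (x - t)) / ρ) * q t * Y1 a q ρ (t - a)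

/-- For `ρ ≠ 0`, `λ = ρ²`, one has `Y(x, λ) = sin(ρx)/ρ + Y₁(x, λ)` on `[a, min(2a, π)]`. -/
theorem solution_on_second_interval
    (a : ℝ) (ha : a ∈ Ioo 0 π)
    (q : ℝ → ℂ) (hq_int : IntegrableOn q (Ioc a π))
    (hq0 : ∀ x ∈ Icc (0:ℝ) a, q x = 0)
    (ρ : ℂ) (hρ : ρ ≠ 0) (Y : ℝ → ℂ) (hY : IsSolution a q (ρ ^ 2) Y)
    (hYuniq : ∀ y : ℝ → ℂ, IsSolution a q (ρ ^ 2) y → EqOn y Y (Icc 0 π)) :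
    ∀ x ∈ Icc a (min (2 * a) π), Y x = Complex.sin (ρ * x) / ρ + Y1 a q ρ x := by
  obtain ⟨hYd, hYdd, hYdc, hY0, hY0'⟩ := hY
  obtain ⟨ha0, haπ⟩ := ha
  have hYc : ContinuousOn Y (Icc 0 π) := fun t ht =>
    (hYd t ht).continuousAt.continuousWithinAt
  -- q is integrable on [0, π]
  have hqI : IntegrableOn q (Icc 0 π) := by
    have h1 : IntegrableOn q (Icc 0 a) := by
      refine (integrableOn_congr_fun (f := fun _ => (0:ℂ)) (g := q)
        (fun t ht => (hq0 t ht).symm) measurableSet_Icc).1 ?_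
      exact integrableOn_zero
    refine (h1.union hq_int).mono_set ?_
    intro t ht
    rcases le_or_gt t a with h | h
    · exact Or.inl ⟨ht.1, h⟩
    · exact Or.inr ⟨h, ht.2⟩
  -- t ↦ q t * Y (t - a) is integrable on [0, π]
  have hmax : ContinuousOn (fun t : ℝ => Y (max t a - a)) (Icc 0 π) := by
    refine hYc.comp (Continuous.continuousOn (by fun_prop)) ?_
    intro t ht
    have h1 : max t a ≤ π := max_le ht.2 haπ.le
    have h2 : a ≤ max t a := le_max_right t a
    show max t a - a ∈ Icc 0 π
    rw [mem_Icc]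
    constructor <;> linarith
  have hQY : IntegrableOn (fun t => q t * Y (t - a)) (Icc 0 π) := by
    refine (hqI.mul_continuousOn hmax isCompact_Icc).congr_fun ?_ measurableSet_Icc
    intro t ht
    rcases le_or_gt t a with h | h
    · simp [hq0 t ⟨ht.1, h⟩]
    · simp [max_eq_left h.le]
  have hGI : ∀ x : ℝ,
      IntegrableOn (fun t : ℝ => Complex.sin (ρ * (x - t)) * (q t * Y (t - a))) (Icc 0 π) := by
    intro x
    exact IntegrableOn.continuousOn_mul (Continuous.continuousOn (by fun_prop)) hQY isCompact_Icc
  -- variation of parameters identity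
  have key : ∀ x ∈ Icc (0:ℝ) π,
      Y x = Complex.sin (ρ * x) / ρ
        + (∫ t in (0:ℝ)..x, Complex.sin (ρ * (x - t)) * (q t * Y (t - a))) / ρ := by
    intro x hx
    set F : ℝ → ℂ := fun t =>
      Complex.sin (ρ * (x - t)) / ρ * deriv Y t + Complex.cos (ρ * (x - t)) * Y t with hF
    have hsub : Icc (0:ℝ) x ⊆ Icc 0 π := Icc_subset_Icc le_rfl hx.2
    have hFcont : ContinuousOn F (Icc 0 x) := by
      apply ContinuousOn.add
      · exact (Continuous.continuousOn (by fun_prop)).mul (hYdc.mono hsub)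
      · exact (Continuous.continuousOn (by fun_prop)).mul (hYc.mono hsub)
    have hFderiv : ∀ t ∈ Ioo (0:ℝ) x,
        HasDerivWithinAt F
          (Complex.sin (ρ * (x - t)) * (q t * Y (t - a)) / ρ) (Ioi t) t := by
      intro t ht
      have htπ : t ∈ Ioo 0 π := ⟨ht.1, lt_of_lt_of_le ht.2 hx.2⟩
      have hsin : HasDerivAt (fun u : ℝ => Complex.sin (ρ * (x - u)))
          (Complex.cos (ρ * (x - t)) * (ρ * (0 - 1))) t := by
        have hinner : HasDerivAt (fun z : ℂ => ρ * ((x:ℂ) - z)) (ρ * (0 - 1)) (t:ℂ) := by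
          exact ((hasDerivAt_const _ ((x:ℂ))).sub (hasDerivAt_id _)).const_mul ρ
        have h1 := (Complex.hasDerivAt_sin (ρ * ((x:ℂ) - (t:ℂ)))).comp (t:ℂ) hinner
        exact h1.comp_ofReal
      have hcos : HasDerivAt (fun u : ℝ => Complex.cos (ρ * (x - u)))
          (-Complex.sin (ρ * (x - t)) * (ρ * (0 - 1))) t := by
        have hinner : HasDerivAt (fun z : ℂ => ρ * ((x:ℂ) - z)) (ρ * (0 - 1)) (t:ℂ) := by
          exact ((hasDerivAt_const _ ((x:ℂ))).sub (hasDerivAt_id _)).const_mul ρ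
        have h1 := (Complex.hasDerivAt_cos (ρ * ((x:ℂ) - (t:ℂ)))).comp (t:ℂ) hinner
        exact h1.comp_ofReal
      have hd1 := (hsin.div_const ρ).mul (hYdd t htπ)
      have hd2 := hcos.mul (hYd t ⟨htπ.1.le, htπ.2.le⟩)
      have hsum := hd1.add hd2
      refine (HasDerivAt.hasDerivWithinAt ?_)
      convert hsum using 1
      · rfl
      field_simp
      ring
    have hGint : IntervalIntegrable
        (fun t => Complex.sin (ρ * (x - t)) * (q t * Y (t - a))) volume 0 x := by
      refine ((hGI x).mono_set ?_).intervalIntegrable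
      rw [uIcc_of_le hx.1]; exact hsub
    have hftc := intervalIntegral.integral_eq_sub_of_hasDeriv_right_of_le hx.1 hFcont hFderiv
      (hGint.div_const ρ)
    have hFx : F x = Y x := by simp [hF]
    have hF0 : F 0 = Complex.sin (ρ * x) / ρ := by simp [hF, hY0, hY0']
    rw [intervalIntegral.integral_div, hFx, hF0] at hftc
    rw [hftc]
    ring
  -- on the first interval
  have first : ∀ x ∈ Icc (0:ℝ) a, Y x = Complex.sin (ρ * x) / ρ := by
    intro x hx
    have hx' : x ∈ Icc 0 π := ⟨hx.1, hx.2.trans haπ.le⟩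
    rw [key x hx']
    have hz : (∫ t in (0:ℝ)..x, Complex.sin (ρ * (x - t)) * (q t * Y (t - a))) = 0 := by
      rw [intervalIntegral.integral_congr (g := fun _ => (0:ℂ)) ?_,
        intervalIntegral.integral_zero]
      intro t ht
      rw [uIcc_of_le hx.1] at ht
      simp [hq0 t ⟨ht.1, ht.2.trans hx.2⟩]
    rw [hz]
    simp
  -- main computation
  intro x hx
  obtain ⟨hax, hxm⟩ := hx
  obtain ⟨hx2a, hxπ⟩ := le_min_iff.1 hxm
  have hx0 : (0:ℝ) ≤ x := ha0.le.trans hax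
  have hxπ' : x ∈ Icc 0 π := ⟨hx0, hxπ⟩
  rw [key x hxπ']
  have hGi1 : IntervalIntegrable
      (fun t => Complex.sin (ρ * (x - t)) * (q t * Y (t - a))) volume 0 a := by
    refine ((hGI x).mono_set ?_).intervalIntegrable
    rw [uIcc_of_le ha0.le]; exact Icc_subset_Icc le_rfl haπ.le
  have hGi2 : IntervalIntegrable
      (fun t => Complex.sin (ρ * (x - t)) * (q t * Y (t - a))) volume a x := by
    refine ((hGI x).mono_set ?_).intervalIntegrable
    rw [uIcc_of_le hax]; exact Icc_subset_Icc ha0.le hxπ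
  have hsplit := intervalIntegral.integral_add_adjacent_intervals hGi1 hGi2
  have h1 : (∫ t in (0:ℝ)..a, Complex.sin (ρ * (x - t)) * (q t * Y (t - a))) = 0 := by
    rw [intervalIntegral.integral_congr (g := fun _ => (0:ℂ)) ?_,
      intervalIntegral.integral_zero]
    intro t ht
    rw [uIcc_of_le ha0.le] at ht
    simp [hq0 t ht]
  have h2 : (∫ t in a..x, Complex.sin (ρ * (x - t)) * (q t * Y (t - a)))
      = ∫ t in a..x,
          (q t * Complex.cos (ρ * (x - 2 * t + a)) / (2 * ρ)
            - q t * Complex.cos (ρ * (x - a)) / (2 * ρ)) := by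
    apply intervalIntegral.integral_congr
    intro t ht
    rw [uIcc_of_le hax] at ht
    have hta : Y (t - a) = Complex.sin (ρ * ((t:ℂ) - (a:ℂ))) / ρ := by
      have h := first (t - a) ⟨by linarith [ht.1], by linarith [ht.2]⟩
      rw [h, Complex.ofReal_sub]
    have trig : Complex.cos (ρ * ((x:ℂ) - 2 * t + a)) - Complex.cos (ρ * ((x:ℂ) - a))
        = 2 * Complex.sin (ρ * ((x:ℂ) - t)) * Complex.sin (ρ * ((t:ℂ) - a)) := by
      rw [Complex.cos_sub_cos]
      have e1 : (ρ * ((x:ℂ) - 2 * t + a) + ρ * ((x:ℂ) - a)) / 2 = ρ * ((x:ℂ) - t) := by ring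
      have e2 : (ρ * ((x:ℂ) - 2 * t + a) - ρ * ((x:ℂ) - a)) / 2 = -(ρ * ((t:ℂ) - a)) := by
        ring
      rw [e1, e2, Complex.sin_neg]
      ring
    simp only [hta]
    linear_combination (-(q t) / (2 * ρ)) * trig
  have hqx : IntegrableOn q (Icc a x) := hqI.mono_set (Icc_subset_Icc ha0.le hxπ)
  have hq2 : IntervalIntegrable q volume a x := by
    refine (hqx.mono_set ?_).intervalIntegrable
    rw [uIcc_of_le hax]
  have hqc : IntervalIntegrable
      (fun t => q t * Complex.cos (ρ * (x - 2 * t + a))) volume a x := by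
    refine ((hqx.mul_continuousOn (Continuous.continuousOn (by fun_prop))
      isCompact_Icc).mono_set ?_).intervalIntegrable
    rw [uIcc_of_le hax]
  rw [intervalIntegral.integral_sub (hqc.div_const _) ((hq2.mul_const _).div_const _)] at h2
  rw [intervalIntegral.integral_div, intervalIntegral.integral_div,
    intervalIntegral.integral_mul_const] at h2
  rw [← hsplit, h1, h2, zero_add, Y1]
  set I1 : ℂ := ∫ t in a..x, q t with hI1
  set I2 : ℂ := ∫ t in a..x, q t * Complex.cos (ρ * (x - 2 * t + a)) with hI2
  rw [div_sub_div_same, div_div]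
  ring
end
end

section
/- Assume a ∈ [2π/5, π/2). For every ρ ∈ ℂ with ρ ≠ 0, setting λ = ρ², one has for all x ∈ [2a, π]: Y(x,λ) = Y₀(x,λ) + Y₁(x,λ) + Y₂(x,λ), where Y₀(x,λ) = sin(ρx)/ρ, Y₁(x,λ) = −(cos ρ(x−a))/(2ρ²) ∫_a^x q(t) dt + (1/(2ρ²)) ∫_a^x q(t) cos ρ(x−2t+a) dt, and Y₂(x,λ) = ∫_{2a}^x (sin ρ(x−t)/ρ) q(t) Y₁(t−a,λ) dt. -/
open Real Set MeasureTheory intervalIntegral Filter Asymptotics Topology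

noncomputable section

lemma hasDerivAt_ccos (ρ : ℂ) (x : ℝ) :
    HasDerivAt (fun x : ℝ => Complex.cos (ρ * x)) (-ρ * Complex.sin (ρ * x)) x := by
  have h : HasDerivAt (fun z : ℂ => Complex.cos (ρ * z)) (-ρ * Complex.sin (ρ * x)) (x : ℂ) := by
    have := (Complex.hasDerivAt_cos (ρ * x)).comp (x : ℂ)
      ((hasDerivAt_id (x : ℂ)).const_mul ρ)
    exact this.congr_deriv (by ring)
  exact h.comp_ofReal

lemma hasDerivAt_csin (ρ : ℂ) (x : ℝ) :
    HasDerivAt (fun x : ℝ => Complex.sin (ρ * x)) (ρ * Complex.cos (ρ * x)) x := by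
  have h : HasDerivAt (fun z : ℂ => Complex.sin (ρ * z)) (ρ * Complex.cos (ρ * x)) (x : ℂ) := by
    have := (Complex.hasDerivAt_sin (ρ * x)).comp (x : ℂ)
      ((hasDerivAt_id (x : ℂ)).const_mul ρ)
    exact this.congr_deriv (by ring)
  exact h.comp_ofReal

/-- The Volterra integral equation satisfied by any solution of the delay equation. -/
theorem keyEq (a : ℝ) (ha0 : 0 ≤ a) (haπ : a ≤ π) (q : ℝ → ℂ)
    (hq_int : IntegrableOn q (Ioc a π)) (hq0 : ∀ x ∈ Icc (0:ℝ) a, q x = 0)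
    (ρ : ℂ) (hρ : ρ ≠ 0) (Y : ℝ → ℂ) (hY : IsSolution a q (ρ ^ 2) Y) :
    ∀ x ∈ Icc (0:ℝ) π, Y x = Complex.sin (ρ * x) / ρ
      + ∫ t in (0:ℝ)..x, Complex.sin (ρ * (x - t)) / ρ * (q t * Y (t - a)) := by
  obtain ⟨hY1, hY2, hY3, hY4, hY5⟩ := hY
  have hπ0 : (0:ℝ) ≤ π := pi_pos.le
  have hccos : Continuous fun u : ℝ => Complex.cos (ρ * u) :=
    Complex.continuous_cos.comp (continuous_const.mul Complex.continuous_ofReal)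
  have hcsin : Continuous fun u : ℝ => Complex.sin (ρ * u) :=
    Complex.continuous_sin.comp (continuous_const.mul Complex.continuous_ofReal)
  have hYc : ContinuousOn Y (Icc 0 π) := fun u hu => (hY1 u hu).continuousAt.continuousWithinAt
  have hshift : ContinuousOn (fun t => Y (t - a)) (Icc a π) := by
    apply hYc.comp (continuous_sub_right a).continuousOn
    intro t ht
    exact ⟨by simp only [mem_Icc] at ht ⊢; linarith [ht.1],
      by simp only [mem_Icc] at ht ⊢; linarith [ht.2]⟩
  have hqIcc : IntegrableOn q (Icc a π) := by rwa [integrableOn_Icc_iff_integrableOn_Ioc]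
  have hg : IntegrableOn (fun t => q t * Y (t - a)) (Icc 0 π) := by
    have h1 : IntegrableOn (fun t => q t * Y (t - a)) (Icc a π) :=
      hqIcc.mul_continuousOn hshift isCompact_Icc
    have h2 : IntegrableOn (fun t => q t * Y (t - a)) (Icc 0 a) := by
      rw [integrableOn_congr_fun (g := fun _ => (0:ℂ))
        (fun t ht => by simp [hq0 t ht]) measurableSet_Icc]
      exact integrableOn_zero
    refine (h2.union h1).mono_set ?_
    intro t ht
    rcases le_total t a with h | h
    · exact Or.inl ⟨ht.1, h⟩
    · exact Or.inr ⟨h, ht.2⟩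
  have hKg : ∀ w : ℝ → ℂ, Continuous w → ∀ c ∈ Icc (0:ℝ) π, ∀ d ∈ Icc (0:ℝ) π,
      IntervalIntegrable (fun t => q t * Y (t - a) * w t) volume c d := by
    intro w hw c hc d hd
    apply IntegrableOn.intervalIntegrable
    refine IntegrableOn.mono_set ?_
      (uIcc_subset_uIcc (by rwa [uIcc_of_le hπ0]) (by rwa [uIcc_of_le hπ0]))
    rw [uIcc_of_le hπ0]
    exact hg.mul_continuousOn hw.continuousOn isCompact_Icc
  have hA : ∀ x ∈ Icc (0:ℝ) π,
      ∫ t in (0:ℝ)..x, q t * Y (t - a) * Complex.cos (ρ * t)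
        = (deriv Y x * Complex.cos (ρ * x) + ρ * (Y x * Complex.sin (ρ * x))) - 1 := by
    intro x hx
    have hres := integral_eq_sub_of_hasDeriv_right_of_le (a := 0) (b := x)
      (f := fun u => deriv Y u * Complex.cos (ρ * u) + ρ * (Y u * Complex.sin (ρ * u)))
      (f' := fun t => q t * Y (t - a) * Complex.cos (ρ * t)) hx.1
      ?_ ?_ ?_
    · rw [hres]; norm_num [hY4, hY5]
    · refine ContinuousOn.mono ?_ (Icc_subset_Icc le_rfl hx.2)
      exact (hY3.mul hccos.continuousOn).add
        (continuousOn_const.mul (hYc.mul hcsin.continuousOn))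
    · intro u hu
      have hu' : u ∈ Ioo 0 π := ⟨hu.1, lt_of_lt_of_le hu.2 hx.2⟩
      have h1 := hY2 u hu'
      have h2 := hY1 u (Ioo_subset_Icc_self hu')
      have hder := (h1.mul (hasDerivAt_ccos ρ u)).add
        (((h2.mul (hasDerivAt_csin ρ u))).const_mul ρ)
      have : HasDerivAt
          (fun u => deriv Y u * Complex.cos (ρ * u) + ρ * (Y u * Complex.sin (ρ * u)))
          (q u * Y (u - a) * Complex.cos (ρ * u)) u := by
        exact hder.congr_deriv (by ring)
      exact this.hasDerivWithinAt
    · exact hKg _ hccos 0 ⟨le_rfl, hπ0⟩ x hx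
  have hB : ∀ x ∈ Icc (0:ℝ) π,
      ∫ t in (0:ℝ)..x, q t * Y (t - a) * Complex.sin (ρ * t)
        = deriv Y x * Complex.sin (ρ * x) - ρ * (Y x * Complex.cos (ρ * x)) := by
    intro x hx
    have hres := integral_eq_sub_of_hasDeriv_right_of_le (a := 0) (b := x)
      (f := fun u => deriv Y u * Complex.sin (ρ * u) - ρ * (Y u * Complex.cos (ρ * u)))
      (f' := fun t => q t * Y (t - a) * Complex.sin (ρ * t)) hx.1
      ?_ ?_ ?_
    · rw [hres]; norm_num [hY4, hY5]
    · refine ContinuousOn.mono ?_ (Icc_subset_Icc le_rfl hx.2)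
      exact (hY3.mul hcsin.continuousOn).sub
        (continuousOn_const.mul (hYc.mul hccos.continuousOn))
    · intro u hu
      have hu' : u ∈ Ioo 0 π := ⟨hu.1, lt_of_lt_of_le hu.2 hx.2⟩
      have h1 := hY2 u hu'
      have h2 := hY1 u (Ioo_subset_Icc_self hu')
      have hder := (h1.mul (hasDerivAt_csin ρ u)).sub
        (((h2.mul (hasDerivAt_ccos ρ u))).const_mul ρ)
      have : HasDerivAt
          (fun u => deriv Y u * Complex.sin (ρ * u) - ρ * (Y u * Complex.cos (ρ * u)))
          (q u * Y (u - a) * Complex.sin (ρ * u)) u := by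
        exact hder.congr_deriv (by ring)
      exact this.hasDerivWithinAt
    · exact hKg _ hcsin 0 ⟨le_rfl, hπ0⟩ x hx
  intro x hx
  have eA := hA x hx
  have eB := hB x hx
  have hsplit : (∫ t in (0:ℝ)..x, Complex.sin (ρ * (x - t)) / ρ * (q t * Y (t - a)))
      = Complex.sin (ρ * x) / ρ * (∫ t in (0:ℝ)..x, q t * Y (t - a) * Complex.cos (ρ * t))
        - Complex.cos (ρ * x) / ρ * (∫ t in (0:ℝ)..x, q t * Y (t - a) * Complex.sin (ρ * t)) := by
    calc (∫ t in (0:ℝ)..x, Complex.sin (ρ * (x - t)) / ρ * (q t * Y (t - a)))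
        = ∫ t in (0:ℝ)..x, (Complex.sin (ρ * x) / ρ * (q t * Y (t - a) * Complex.cos (ρ * t))
            - Complex.cos (ρ * x) / ρ * (q t * Y (t - a) * Complex.sin (ρ * t))) := by
          apply integral_congr
          intro t _
          simp only
          have h1 : ρ * ((x:ℂ) - t) = ρ * x - ρ * t := by ring
          rw [h1, Complex.sin_sub]
          ring
      _ = (∫ t in (0:ℝ)..x, Complex.sin (ρ * x) / ρ * (q t * Y (t - a) * Complex.cos (ρ * t)))
            - ∫ t in (0:ℝ)..x, Complex.cos (ρ * x) / ρ * (q t * Y (t - a) * Complex.sin (ρ * t)) :=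
          integral_sub ((hKg _ hccos 0 ⟨le_rfl, hπ0⟩ x hx).const_mul _)
            ((hKg _ hcsin 0 ⟨le_rfl, hπ0⟩ x hx).const_mul _)
      _ = _ := by rw [intervalIntegral.integral_const_mul, intervalIntegral.integral_const_mul]
  have main : Y x = Complex.sin (ρ * x) / ρ
        * (deriv Y x * Complex.cos (ρ * x) + ρ * (Y x * Complex.sin (ρ * x)))
      - Complex.cos (ρ * x) / ρ
        * (deriv Y x * Complex.sin (ρ * x) - ρ * (Y x * Complex.cos (ρ * x))) := by
    have hsc := Complex.sin_sq_add_cos_sq (ρ * x)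
    field_simp
    linear_combination (-(Y x * ρ)) * hsc
  rw [hsplit, eA, eB]
  linear_combination main

/-- The product-to-sum trigonometric evaluation of the first iterated integral. -/
theorem trigEq (a : ℝ) (q : ℝ → ℂ)
    (hqIcc : IntegrableOn q (Icc a π)) (ρ : ℂ) (hρ : ρ ≠ 0)
    (x : ℝ) (hx : x ∈ Icc a π) :
    (∫ t in a..x, Complex.sin (ρ * (x - t)) / ρ * (q t * (Complex.sin (ρ * (t - a)) / ρ)))
      = Y1 a q ρ x := by
  have hsub : uIcc a x ⊆ Icc a π := by
    rw [uIcc_of_le hx.1]; exact Icc_subset_Icc le_rfl hx.2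
  have hq1 : IntervalIntegrable q volume a x := (hqIcc.mono_set hsub).intervalIntegrable
  have hwc : Continuous fun t : ℝ => Complex.cos (ρ * (x - 2 * t + a)) := by
    apply Complex.continuous_cos.comp
    exact continuous_const.mul (by continuity)
  have hq2 : IntervalIntegrable (fun t => q t * Complex.cos (ρ * (x - 2 * t + a))) volume a x :=
    (((hqIcc.mul_continuousOn hwc.continuousOn isCompact_Icc)).mono_set hsub).intervalIntegrable
  unfold Y1
  calc (∫ t in a..x, Complex.sin (ρ * (x - t)) / ρ * (q t * (Complex.sin (ρ * (t - a)) / ρ)))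
      = ∫ t in a..x, (-(Complex.cos (ρ * (x - a)) / (2 * ρ ^ 2)) * q t
          + (1 / (2 * ρ ^ 2)) * (q t * Complex.cos (ρ * (x - 2 * t + a)))) := by
        apply integral_congr
        intro t _
        simp only
        have e1 : ρ * ((x:ℂ) - a) = ρ * ((x:ℂ) - t) + ρ * ((t:ℂ) - a) := by ring
        have e2 : ρ * ((x:ℂ) - 2 * t + a) = ρ * ((x:ℂ) - t) - ρ * ((t:ℂ) - a) := by ring
        rw [e1, e2, Complex.cos_add, Complex.cos_sub]
        field_simp
        ring
    _ = (∫ t in a..x, -(Complex.cos (ρ * (x - a)) / (2 * ρ ^ 2)) * q t)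
          + ∫ t in a..x, (1 / (2 * ρ ^ 2)) * (q t * Complex.cos (ρ * (x - 2 * t + a))) :=
        integral_add (hq1.const_mul _) (hq2.const_mul _)
    _ = _ := by rw [intervalIntegral.integral_const_mul, intervalIntegral.integral_const_mul]

/-- For `a ∈ [2π/5, π/2)`, `ρ ≠ 0`, `λ = ρ²`, one has
`Y(x, λ) = Y₀(x, λ) + Y₁(x, λ) + Y₂(x, λ)` for `x ∈ [2a, π]`, with `Y₀(x, λ) = sin(ρx)/ρ`. -/
theorem solution_on_third_interval
    (a : ℝ) (ha1 : 2 * π / 5 ≤ a) (ha2 : a < π / 2)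
    (q : ℝ → ℂ) (hq_int : IntegrableOn q (Ioc a π))
    (hq0 : ∀ x ∈ Icc (0:ℝ) a, q x = 0)
    (ρ : ℂ) (hρ : ρ ≠ 0) (Y : ℝ → ℂ) (hY : IsSolution a q (ρ ^ 2) Y)
    (hYuniq : ∀ y : ℝ → ℂ, IsSolution a q (ρ ^ 2) y → EqOn y Y (Icc 0 π)) :
    ∀ x ∈ Icc (2 * a) π,
      Y x = Complex.sin (ρ * x) / ρ + Y1 a q ρ x + Y2 a q ρ x := by
  have hπpos := pi_pos
  have ha0 : 0 < a := by linarith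
  have haπ : a < π := by linarith
  have h2aπ : 2 * a ≤ π := by linarith
  have hπ3a : π ≤ 3 * a := by linarith
  have hπ0 : (0:ℝ) ≤ π := hπpos.le
  have key := keyEq a ha0.le haπ.le q hq_int hq0 ρ hρ Y hY
  obtain ⟨hY1d, hY2d, hY3d, hY4d, hY5d⟩ := hY
  have hYc : ContinuousOn Y (Icc 0 π) := fun u hu => (hY1d u hu).continuousAt.continuousWithinAt
  have hshift : ContinuousOn (fun t => Y (t - a)) (Icc a π) := by
    apply hYc.comp (continuous_sub_right a).continuousOn
    intro t ht
    exact ⟨by simp only [mem_Icc] at ht ⊢; linarith [ht.1],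
      by simp only [mem_Icc] at ht ⊢; linarith [ht.2]⟩
  have hqIcc : IntegrableOn q (Icc a π) := by rwa [integrableOn_Icc_iff_integrableOn_Ioc]
  -- step 1 : on [0, a], `Y` is `sin (ρ x) / ρ`
  have step1 : ∀ u ∈ Icc (0:ℝ) a, Y u = Complex.sin (ρ * u) / ρ := by
    intro u hu
    have hu' : u ∈ Icc 0 π := ⟨hu.1, by linarith [hu.2]⟩
    rw [key u hu']
    have hz : (∫ t in (0:ℝ)..u, Complex.sin (ρ * (u - t)) / ρ * (q t * Y (t - a))) = 0 := by
      rw [integral_congr (g := fun _ => (0:ℂ)) ?_]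
      · simp
      · intro t ht
        rw [uIcc_of_le hu.1] at ht
        simp [hq0 t ⟨ht.1, le_trans ht.2 hu.2⟩]
    rw [hz, add_zero]
  -- integrability of kernels against `q` times a continuous factor, on `[a, π]`
  have hKqa : ∀ (x' : ℝ) (w : ℝ → ℂ), ContinuousOn w (Icc a π) →
      ∀ c ∈ Icc a π, ∀ d ∈ Icc a π,
      IntervalIntegrable (fun t => Complex.sin (ρ * (x' - t)) / ρ * (q t * w t)) volume c d := by
    intro x' w hw c hc d hd
    have heq : (fun t : ℝ => Complex.sin (ρ * ((x':ℂ) - (t:ℂ))) / ρ * (q t * w t))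
        = fun t : ℝ => q t * (Complex.sin (ρ * ((x':ℂ) - (t:ℂ))) / ρ * w t) := by
      funext t; ring
    rw [heq]
    apply IntegrableOn.intervalIntegrable
    have hsub : uIcc c d ⊆ Icc a π := by
      rw [← uIcc_of_le haπ.le]
      exact uIcc_subset_uIcc (by rwa [uIcc_of_le haπ.le]) (by rwa [uIcc_of_le haπ.le])
    refine IntegrableOn.mono_set ?_ hsub
    refine hqIcc.mul_continuousOn (ContinuousOn.mul ?_ hw) isCompact_Icc
    exact ((Complex.continuous_sin.comp
      (continuous_const.mul (continuous_const.sub Complex.continuous_ofReal))).div_const ρ).continuousOn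
  -- the integrand vanishes on `[0, a]`
  have hzero_int : ∀ x' : ℝ, IntervalIntegrable
      (fun t => Complex.sin (ρ * (x' - t)) / ρ * (q t * Y (t - a))) volume 0 a := by
    intro x'
    rw [intervalIntegrable_iff]
    have hEq : EqOn (fun t : ℝ => Complex.sin (ρ * ((x':ℂ) - (t:ℂ))) / ρ * (q t * Y (t - a)))
        (fun _ => (0:ℂ)) (uIoc (0:ℝ) a) := by
      intro t ht
      rw [uIoc_of_le ha0.le] at ht
      simp [hq0 t ⟨ht.1.le, ht.2⟩]
    rw [integrableOn_congr_fun hEq measurableSet_uIoc]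
    exact integrableOn_zero
  have hzero_eq : ∀ x' : ℝ,
      (∫ t in (0:ℝ)..a, Complex.sin (ρ * (x' - t)) / ρ * (q t * Y (t - a))) = 0 := by
    intro x'
    rw [integral_congr (g := fun _ => (0:ℂ)) ?_]
    · simp
    · intro t ht
      rw [uIcc_of_le ha0.le] at ht
      simp [hq0 t ht]
  -- step 2 : on [a, 2a], `Y = sin (ρ x) / ρ + Y1`
  have step2 : ∀ u ∈ Icc a (2 * a), Y u = Complex.sin (ρ * u) / ρ + Y1 a q ρ u := by
    intro u hu
    have huπ : u ∈ Icc 0 π := ⟨by linarith [hu.1], by linarith [hu.2]⟩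
    rw [key u huπ]
    congr 1
    have hs := integral_add_adjacent_intervals (hzero_int u)
      (hKqa u (fun t => Y (t - a)) hshift a ⟨le_rfl, haπ.le⟩ u ⟨hu.1, huπ.2⟩)
    rw [← hs, hzero_eq u, zero_add]
    calc (∫ t in a..u, Complex.sin (ρ * (u - t)) / ρ * (q t * Y (t - a)))
        = ∫ t in a..u, Complex.sin (ρ * (u - t)) / ρ
            * (q t * (Complex.sin (ρ * (t - a)) / ρ)) := by
          apply integral_congr
          intro t ht
          rw [uIcc_of_le hu.1] at ht
          have h1 := step1 (t - a) ⟨by linarith [ht.1], by linarith [ht.2, hu.2]⟩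
          rw [Complex.ofReal_sub] at h1
          simp only [h1]
      _ = Y1 a q ρ u := trigEq a q hqIcc ρ hρ u ⟨hu.1, huπ.2⟩
  -- step 3 : the main computation on [2a, π]
  intro x hx
  have hx0π : x ∈ Icc 0 π := ⟨by linarith [hx.1], hx.2⟩
  have hxa : x ∈ Icc a π := ⟨by linarith [hx.1], hx.2⟩
  have h2aIcc : (2 * a) ∈ Icc a π := ⟨by linarith, h2aπ⟩
  have haIcc : a ∈ Icc a π := ⟨le_rfl, haπ.le⟩
  have hcontS : ContinuousOn (fun t : ℝ => Complex.sin (ρ * ((t:ℂ) - (a:ℂ))) / ρ) (Icc a π) :=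
    ((Complex.continuous_sin.comp
      (continuous_const.mul (Complex.continuous_ofReal.sub continuous_const))).div_const ρ).continuousOn
  have hAint := hKqa x (fun t => Complex.sin (ρ * ((t:ℂ) - (a:ℂ))) / ρ) hcontS
  have hBint := hKqa x (fun t => Y (t - a) - Complex.sin (ρ * ((t:ℂ) - (a:ℂ))) / ρ)
    (hshift.sub hcontS)
  rw [key x hx0π]
  have e0 := integral_add_adjacent_intervals (hzero_int x)
    (hKqa x (fun t => Y (t - a)) hshift a haIcc x hxa)
  rw [← e0, hzero_eq x, zero_add]
  have e1 : (∫ t in a..x, Complex.sin (ρ * (x - t)) / ρ * (q t * Y (t - a)))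
      = (∫ t in a..x, Complex.sin (ρ * (x - t)) / ρ * (q t * (Complex.sin (ρ * (t - a)) / ρ)))
        + ∫ t in a..x, Complex.sin (ρ * (x - t)) / ρ
            * (q t * (Y (t - a) - Complex.sin (ρ * (t - a)) / ρ)) := by
    rw [← integral_add (hAint a haIcc x hxa) (hBint a haIcc x hxa)]
    apply integral_congr
    intro t _
    simp only
    ring
  have e2 : (∫ t in a..x, Complex.sin (ρ * (x - t)) / ρ
      * (q t * (Complex.sin (ρ * (t - a)) / ρ))) = Y1 a q ρ x :=
    trigEq a q hqIcc ρ hρ x hxa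
  have e3 := integral_add_adjacent_intervals (hBint a haIcc (2 * a) h2aIcc)
    (hBint (2 * a) h2aIcc x hxa)
  have e4 : (∫ t in a..(2 * a), Complex.sin (ρ * (x - t)) / ρ
      * (q t * (Y (t - a) - Complex.sin (ρ * (t - a)) / ρ))) = 0 := by
    rw [integral_congr (g := fun _ => (0:ℂ)) ?_]
    · simp
    · intro t ht
      rw [uIcc_of_le (by linarith : a ≤ 2 * a)] at ht
      have h1 := step1 (t - a) ⟨by linarith [ht.1], by linarith [ht.2]⟩
      rw [Complex.ofReal_sub] at h1
      simp [h1]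
  have e5 : (∫ t in (2 * a)..x, Complex.sin (ρ * (x - t)) / ρ
      * (q t * (Y (t - a) - Complex.sin (ρ * (t - a)) / ρ))) = Y2 a q ρ x := by
    unfold Y2
    apply integral_congr
    intro t ht
    rw [uIcc_of_le hx.1] at ht
    have h2 := step2 (t - a) ⟨by linarith [ht.1], by linarith [ht.2, hx.2]⟩
    rw [Complex.ofReal_sub] at h2
    simp only [h2]
    ring
  rw [e1, e2, ← e3, e4, e5, zero_add, ← add_assoc]
end
end

section
/- Assume a ∈ [2π/5, π/2). For every ρ ∈ ℂ with ρ ≠ 0, setting λ = ρ², the characteristic function Δ₀ satisfies Δ₀(λ) = sin(ρπ)/ρ − A₀ (cos ρ(π−a))/(2ρ²) + (1/(2ρ²)) ∫_a^π q(t) cos ρ(2t−π−a) dt + Y₂(π,λ), where A₀ = ∫_a^π q(t) dt and Y₂(x,λ) = ∫_{2a}^x (sin ρ(x−t)/ρ) q(t) Y₁(t−a,λ) dt with Y₁(x,λ) = −(cos ρ(x−a))/(2ρ²) ∫_a^x q(t) dt + (1/(2ρ²)) ∫_a^x q(t) cos ρ(x−2t+a) dt. -/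
open Real Set MeasureTheory intervalIntegral Filter Asymptotics Topology

noncomputable section

lemma hasDerivAt_sinrho (ρ : ℂ) (t : ℝ) :
    HasDerivAt (fun u : ℝ => Complex.sin (ρ * u)) (ρ * Complex.cos (ρ * t)) t := by
  have h : HasDerivAt (fun z : ℂ => Complex.sin (ρ * z)) (Complex.cos (ρ * t) * ρ) (t : ℂ) := by
    simpa [Function.comp_def] using (Complex.hasDerivAt_sin (ρ * t)).comp (t : ℂ) ((hasDerivAt_id (t : ℂ)).const_mul ρ)
  simpa [mul_comm] using h.comp_ofReal

lemma hasDerivAt_cosrho (ρ : ℂ) (t : ℝ) :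
    HasDerivAt (fun u : ℝ => Complex.cos (ρ * u)) (-(ρ * Complex.sin (ρ * t))) t := by
  have h : HasDerivAt (fun z : ℂ => Complex.cos (ρ * z)) (-Complex.sin (ρ * t) * ρ) (t : ℂ) := by
    simpa [Function.comp_def] using (Complex.hasDerivAt_cos (ρ * t)).comp (t : ℂ) ((hasDerivAt_id (t : ℂ)).const_mul ρ)
  have := h.comp_ofReal
  convert this using 1
  ring

lemma continuous_sinrho (ρ : ℂ) : Continuous fun u : ℝ => Complex.sin (ρ * u) :=
  Complex.continuous_sin.comp (continuous_const.mul Complex.continuous_ofReal)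

lemma continuous_cosrho (ρ : ℂ) : Continuous fun u : ℝ => Complex.cos (ρ * u) :=
  Complex.continuous_cos.comp (continuous_const.mul Complex.continuous_ofReal)

lemma to_ii {f : ℝ → ℂ} (hf : IntegrableOn f (Ioc 0 π)) {u v : ℝ}
    (hu : 0 ≤ u) (hv : v ≤ π) (huv : u ≤ v) : IntervalIntegrable f volume u v := by
  rw [intervalIntegrable_iff, uIoc_of_le huv]
  exact hf.mono_set (Ioc_subset_Ioc hu hv)

lemma qmul_integrable (a : ℝ) (ha0 : 0 ≤ a) (haπ : a ≤ π) (q : ℝ → ℂ)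
    (hq_int : IntegrableOn q (Ioc a π)) (hq0 : ∀ x ∈ Icc (0:ℝ) a, q x = 0)
    (w : ℝ → ℂ) (hw : ContinuousOn w (Icc 0 π)) (g : ℝ → ℂ) (hg : Continuous g) :
    IntegrableOn (fun t => g t * (q t * w (t - a))) (Ioc 0 π) := by
  have h1 : IntegrableOn (fun t => q t * w (t - a)) (Ioc a π) := by
    have hq' : IntegrableOn q (Icc a π) := (integrableOn_Icc_iff_integrableOn_Ioc enorm_ne_top).2 hq_int
    have hc : ContinuousOn (fun t => w (t - a)) (Icc a π) := by
      apply hw.comp (continuous_id.sub continuous_const).continuousOn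
      intro t ht
      exact ⟨by simpa using ht.1, by simp only [Pi.sub_apply, id_eq]; linarith [ht.2]⟩
    exact (hq'.mul_continuousOn hc isCompact_Icc).mono_set Ioc_subset_Icc_self
  have h0 : IntegrableOn (fun t => q t * w (t - a)) (Ioc 0 a) := by
    have he : EqOn (fun t => q t * w (t - a)) (fun _ => (0:ℂ)) (Ioc 0 a) := by
      intro t ht; simp [hq0 t ⟨le_of_lt ht.1, ht.2⟩]
    exact (integrableOn_congr_fun he measurableSet_Ioc).2 (integrableOn_zero)
  have hu := h0.union h1
  rw [Ioc_union_Ioc_eq_Ioc ha0 haπ] at hu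
  exact hu.continuousOn_mul_of_subset hg.continuousOn isCompact_Icc measurableSet_Ioc
    Ioc_subset_Icc_self

lemma key_ii (a : ℝ) (ha0 : 0 ≤ a) (haπ : a ≤ π) (q : ℝ → ℂ)
    (hq_int : IntegrableOn q (Ioc a π)) (hq0 : ∀ x ∈ Icc (0:ℝ) a, q x = 0)
    (w : ℝ → ℂ) (hw : ContinuousOn w (Icc 0 π)) (g : ℝ → ℂ) (hg : Continuous g)
    (f : ℝ → ℂ) (hf : ∀ t ∈ Ioc (0:ℝ) π, f t = g t * (q t * w (t - a)))
    {u v : ℝ} (hu : 0 ≤ u) (hv : v ≤ π) (huv : u ≤ v) :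
    IntervalIntegrable f volume u v := by
  have h := qmul_integrable a ha0 haπ q hq_int hq0 w hw g hg
  exact to_ii ((integrableOn_congr_fun hf measurableSet_Ioc).2 h) hu hv huv

lemma ptwise (ρ : ℂ) (hρ : ρ ≠ 0) (qt : ℂ) (a x t : ℝ) :
    Complex.sin (ρ * x) * (Complex.cos (ρ * t) * (qt * (Complex.sin (ρ * (t - a)) / ρ)))
      - Complex.cos (ρ * x) * (Complex.sin (ρ * t) * (qt * (Complex.sin (ρ * (t - a)) / ρ)))
    = (1 / (2 * ρ)) * (qt * Complex.cos (ρ * (x - 2 * t + a)))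
      - Complex.cos (ρ * (x - a)) / (2 * ρ) * qt := by
  have h1 : (ρ * ((x:ℂ) - 2*(t:ℂ) + (a:ℂ))) = (ρ * x - ρ * t) - (ρ * t - ρ * a) := by ring
  have h2 : (ρ * ((x:ℂ) - (a:ℂ))) = (ρ * x - ρ * t) + (ρ * t - ρ * a) := by ring
  have h3 : (ρ * ((t:ℂ) - (a:ℂ))) = ρ * t - ρ * a := by ring
  rw [h1, h2, h3]
  simp only [Complex.cos_sub, Complex.cos_add, Complex.sin_sub, Complex.sin_add]
  field_simp
  ring

theorem main_aux (a : ℝ) (ha0 : 0 < a) (h2a : 2 * a < π) (h3a : π ≤ 3 * a)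
    (q : ℝ → ℂ) (hq_int : IntegrableOn q (Ioc a π))
    (hq0 : ∀ x ∈ Icc (0:ℝ) a, q x = 0)
    (ρ : ℂ) (hρ : ρ ≠ 0) (y : ℝ → ℂ)
    (hy1 : ∀ x ∈ Icc (0:ℝ) π, HasDerivAt y (deriv y x) x)
    (hy2 : ∀ x ∈ Ioo (0:ℝ) π, HasDerivAt (deriv y) (q x * y (x - a) - ρ ^ 2 * y x) x)
    (hy3 : ContinuousOn (deriv y) (Icc 0 π)) (hy4 : y 0 = 0) (hy5 : deriv y 0 = 1) :
    y π = Complex.sin (ρ * π) / ρ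
      - (∫ t in a..π, q t) * Complex.cos (ρ * (π - a)) / (2 * ρ ^ 2)
      + (1 / (2 * ρ ^ 2)) * (∫ t in a..π, q t * Complex.cos (ρ * (2 * t - π - a)))
      + Y2 a q ρ π := by
  have haπ : a < π := by linarith
  have hyc : ContinuousOn y (Icc 0 π) := fun x hx => ((hy1 x hx).continuousAt).continuousWithinAt
  -- we denote by `ws` the function u ↦ sin(ρ u)/ρ
  have hws : ContinuousOn (fun u : ℝ => Complex.sin (ρ * u) / ρ) (Icc 0 π) :=
    ((continuous_sinrho ρ).div_const ρ).continuousOn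
  -- `Qclaim` : ρ y sin + y' cos = 1 + ∫ cos · q · y(·-a)
  have Qclaim : ∀ x ∈ Icc (0:ℝ) π,
      ρ * y x * Complex.sin (ρ * x) + deriv y x * Complex.cos (ρ * x)
        = 1 + ∫ t in (0:ℝ)..x, Complex.cos (ρ * t) * (q t * y (t - a)) := by
    intro x hx
    have hii : IntervalIntegrable (fun t => Complex.cos (ρ * t) * (q t * y (t - a)))
        volume 0 x :=
      key_ii a ha0.le haπ.le q hq_int hq0 y hyc _ (continuous_cosrho ρ) _
        (fun t _ => rfl) le_rfl hx.2 hx.1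
    have hftc := intervalIntegral.integral_eq_sub_of_hasDeriv_right_of_le hx.1
      (f := fun u => ρ * y u * Complex.sin (ρ * u) + deriv y u * Complex.cos (ρ * u))
      (f' := fun t => Complex.cos (ρ * t) * (q t * y (t - a))) ?_ ?_ hii
    · rw [hftc]
      simp [hy4, hy5]
    · apply ContinuousOn.mono (s := Icc 0 π) _ (Icc_subset_Icc le_rfl hx.2)
      exact ((continuousOn_const.mul hyc).mul (continuous_sinrho ρ).continuousOn).add
        (hy3.mul (continuous_cosrho ρ).continuousOn)
    · intro t ht
      have ht' : t ∈ Icc (0:ℝ) π := ⟨ht.1.le, le_trans ht.2.le hx.2⟩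
      have ht'' : t ∈ Ioo (0:ℝ) π := ⟨ht.1, lt_of_lt_of_le ht.2 hx.2⟩
      have hd := (((hy1 t ht').const_mul ρ).mul (hasDerivAt_sinrho ρ t)).add
        ((hy2 t ht'').mul (hasDerivAt_cosrho ρ t))
      have hval : ρ * deriv y t * Complex.sin (ρ * t) + ρ * y t * (ρ * Complex.cos (ρ * t))
          + ((q t * y (t - a) - ρ ^ 2 * y t) * Complex.cos (ρ * t)
            + deriv y t * -(ρ * Complex.sin (ρ * t)))
          = Complex.cos (ρ * t) * (q t * y (t - a)) := by ring
      exact (hval ▸ hd).hasDerivWithinAt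
  -- `Pclaim` : ρ y cos − y' sin = −∫ sin · q · y(·-a)
  have Pclaim : ∀ x ∈ Icc (0:ℝ) π,
      ρ * y x * Complex.cos (ρ * x) - deriv y x * Complex.sin (ρ * x)
        = - ∫ t in (0:ℝ)..x, Complex.sin (ρ * t) * (q t * y (t - a)) := by
    intro x hx
    have hii : IntervalIntegrable (fun t => Complex.sin (ρ * t) * (q t * y (t - a)))
        volume 0 x :=
      key_ii a ha0.le haπ.le q hq_int hq0 y hyc _ (continuous_sinrho ρ) _
        (fun t _ => rfl) le_rfl hx.2 hx.1
    have hftc := intervalIntegral.integral_eq_sub_of_hasDeriv_right_of_le hx.1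
      (f := fun u => ρ * y u * Complex.cos (ρ * u) - deriv y u * Complex.sin (ρ * u))
      (f' := fun t => -(Complex.sin (ρ * t) * (q t * y (t - a)))) ?_ ?_ hii.neg
    · rw [intervalIntegral.integral_neg] at hftc
      rw [hftc]
      simp [hy4, hy5]
    · apply ContinuousOn.mono (s := Icc 0 π) _ (Icc_subset_Icc le_rfl hx.2)
      exact ((continuousOn_const.mul hyc).mul (continuous_cosrho ρ).continuousOn).sub
        (hy3.mul (continuous_sinrho ρ).continuousOn)
    · intro t ht
      have ht' : t ∈ Icc (0:ℝ) π := ⟨ht.1.le, le_trans ht.2.le hx.2⟩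
      have ht'' : t ∈ Ioo (0:ℝ) π := ⟨ht.1, lt_of_lt_of_le ht.2 hx.2⟩
      have hd := (((hy1 t ht').const_mul ρ).mul (hasDerivAt_cosrho ρ t)).sub
        ((hy2 t ht'').mul (hasDerivAt_sinrho ρ t))
      have hval : ρ * deriv y t * Complex.cos (ρ * t) + ρ * y t * -(ρ * Complex.sin (ρ * t))
          - ((q t * y (t - a) - ρ ^ 2 * y t) * Complex.sin (ρ * t)
            + deriv y t * (ρ * Complex.cos (ρ * t)))
          = -(Complex.sin (ρ * t) * (q t * y (t - a))) := by ring
      exact (hval ▸ hd).hasDerivWithinAt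
  -- Volterra-type representation
  have hV : ∀ x ∈ Icc (0:ℝ) π, ρ * y x
      = Complex.sin (ρ * x) * (1 + ∫ t in (0:ℝ)..x, Complex.cos (ρ * t) * (q t * y (t - a)))
        - Complex.cos (ρ * x) * ∫ t in (0:ℝ)..x, Complex.sin (ρ * t) * (q t * y (t - a)) := by
    intro x hx
    have h1 := Qclaim x hx
    have h2 := Pclaim x hx
    have pyth := Complex.sin_sq_add_cos_sq (ρ * (x:ℂ))
    linear_combination Complex.sin (ρ * (x:ℂ)) * h1 + Complex.cos (ρ * (x:ℂ)) * h2
      - (ρ * y x) * pyth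
  -- Step 1 : on [0,a], y = sin(ρ·)/ρ
  have S1 : ∀ u ∈ Icc (0:ℝ) a, y u = Complex.sin (ρ * u) / ρ := by
    intro u hu
    have hu' : u ∈ Icc (0:ℝ) π := ⟨hu.1, le_trans hu.2 haπ.le⟩
    have h := hV u hu'
    have hC : (∫ t in (0:ℝ)..u, Complex.cos (ρ * t) * (q t * y (t - a))) = 0 := by
      rw [intervalIntegral.integral_congr (g := fun _ => (0:ℂ)) ?_]
      · simp
      · intro t ht
        rw [uIcc_of_le hu.1] at ht
        simp [hq0 t ⟨ht.1, le_trans ht.2 hu.2⟩]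
    have hS : (∫ t in (0:ℝ)..u, Complex.sin (ρ * t) * (q t * y (t - a))) = 0 := by
      rw [intervalIntegral.integral_congr (g := fun _ => (0:ℂ)) ?_]
      · simp
      · intro t ht
        rw [uIcc_of_le hu.1] at ht
        simp [hq0 t ⟨ht.1, le_trans ht.2 hu.2⟩]
    rw [hC, hS] at h
    rw [eq_div_iff hρ]
    linear_combination h
  -- vanishing of Y1 on [0,a]
  have hY1z : ∀ u, 0 ≤ u → u ≤ a → Y1 a q ρ u = 0 := by
    intro u h0u hua
    have e1 : (∫ t in a..u, q t) = 0 := by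
      rw [intervalIntegral.integral_congr (g := fun _ => (0:ℂ)) ?_]
      · simp
      · intro t ht
        rw [uIcc_of_ge hua] at ht
        simp [hq0 t ⟨le_trans h0u ht.1, ht.2⟩]
    have e2 : (∫ t in a..u, q t * Complex.cos (ρ * (u - 2 * t + a))) = 0 := by
      rw [intervalIntegral.integral_congr (g := fun _ => (0:ℂ)) ?_]
      · simp
      · intro t ht
        rw [uIcc_of_ge hua] at ht
        simp [hq0 t ⟨le_trans h0u ht.1, ht.2⟩]
    rw [Y1, e1, e2]
    simp
  -- combination of the sine-kernel integrals into Y1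
  have trig_comb : ∀ x, a ≤ x → x ≤ π →
      Complex.sin (ρ * x) * (∫ t in (0:ℝ)..x,
          Complex.cos (ρ * t) * (q t * (Complex.sin (ρ * (t - a)) / ρ)))
        - Complex.cos (ρ * x) * (∫ t in (0:ℝ)..x,
          Complex.sin (ρ * t) * (q t * (Complex.sin (ρ * (t - a)) / ρ)))
      = ρ * Y1 a q ρ x := by
    intro x hax hxπ
    have h0x : (0:ℝ) ≤ x := le_trans ha0.le hax
    have hiC1 : IntervalIntegrable
        (fun t => Complex.cos (ρ * t) * (q t * (Complex.sin (ρ * (t - a)) / ρ))) volume 0 x :=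
      key_ii a ha0.le haπ.le q hq_int hq0 _ hws _ (continuous_cosrho ρ) _
        (fun t _ => by push_cast; ring) le_rfl hxπ h0x
    have hiS1 : IntervalIntegrable
        (fun t => Complex.sin (ρ * t) * (q t * (Complex.sin (ρ * (t - a)) / ρ))) volume 0 x :=
      key_ii a ha0.le haπ.le q hq_int hq0 _ hws _ (continuous_sinrho ρ) _
        (fun t _ => by push_cast; ring) le_rfl hxπ h0x
    have hgc : Continuous fun t : ℝ => Complex.cos (ρ * ((x:ℂ) - 2 * (t:ℂ) + (a:ℂ))) := by
      fun_prop
    have hiqc : ∀ u v : ℝ, 0 ≤ u → v ≤ π → u ≤ v → IntervalIntegrable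
        (fun t => q t * Complex.cos (ρ * ((x:ℝ) - 2 * t + a))) volume u v := by
      intro u v hu hv huv
      exact key_ii a ha0.le haπ.le q hq_int hq0 (fun _ => 1) continuousOn_const _ hgc _
        (fun t _ => by simp [mul_comm]) hu hv huv
    have hiq : ∀ u v : ℝ, 0 ≤ u → v ≤ π → u ≤ v → IntervalIntegrable q volume u v := by
      intro u v hu hv huv
      exact key_ii a ha0.le haπ.le q hq_int hq0 (fun _ => 1) continuousOn_const
        (fun _ => 1) continuous_const q (fun t _ => by simp) hu hv huv
    rw [← intervalIntegral.integral_const_mul, ← intervalIntegral.integral_const_mul,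
      ← intervalIntegral.integral_sub (hiC1.const_mul _) (hiS1.const_mul _)]
    rw [intervalIntegral.integral_congr
      (g := fun t => (1 / (2 * ρ)) * (q t * Complex.cos (ρ * (x - 2 * t + a)))
        - Complex.cos (ρ * (x - a)) / (2 * ρ) * q t)
      (fun t _ => ptwise ρ hρ (q t) a x t)]
    rw [intervalIntegral.integral_sub ((hiqc 0 x le_rfl hxπ h0x).const_mul _)
      ((hiq 0 x le_rfl hxπ h0x).const_mul _),
      intervalIntegral.integral_const_mul, intervalIntegral.integral_const_mul]
    have z1 : (∫ t in (0:ℝ)..a, q t * Complex.cos (ρ * ((x:ℝ) - 2 * t + a))) = 0 := by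
      rw [intervalIntegral.integral_congr (g := fun _ => (0:ℂ)) ?_]
      · simp
      · intro t ht
        rw [uIcc_of_le ha0.le] at ht
        simp [hq0 t ht]
    have z2 : (∫ t in (0:ℝ)..a, q t) = 0 := by
      rw [intervalIntegral.integral_congr (g := fun _ => (0:ℂ)) ?_]
      · simp
      · intro t ht
        rw [uIcc_of_le ha0.le] at ht
        simp [hq0 t ht]
    rw [← intervalIntegral.integral_add_adjacent_intervals (hiqc 0 a le_rfl haπ.le ha0.le)
      (hiqc a x ha0.le hxπ hax), z1, zero_add,
      ← intervalIntegral.integral_add_adjacent_intervals (hiq 0 a le_rfl haπ.le ha0.le)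
      (hiq a x ha0.le hxπ hax), z2, zero_add, Y1]
    field_simp
    ring
  -- Step 2 : on [0, π-a], y = sin(ρ·)/ρ + Y1
  have S2 : ∀ x, 0 ≤ x → x ≤ π - a → y x = Complex.sin (ρ * x) / ρ + Y1 a q ρ x := by
    intro x h0x hxpa
    by_cases hxa : x ≤ a
    · rw [S1 x ⟨h0x, hxa⟩, hY1z x h0x hxa, add_zero]
    · push_neg at hxa
      have hxπ : x ≤ π := by linarith
      have h := hV x ⟨h0x, hxπ⟩
      have hCC : (∫ t in (0:ℝ)..x, Complex.cos (ρ * t) * (q t * y (t - a)))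
          = ∫ t in (0:ℝ)..x, Complex.cos (ρ * t) * (q t * (Complex.sin (ρ * (t - a)) / ρ)) := by
        apply intervalIntegral.integral_congr
        intro t ht
        rw [uIcc_of_le h0x] at ht
        by_cases hta : t ≤ a
        · simp [hq0 t ⟨ht.1, hta⟩]
        · push_neg at hta
          have hy := S1 (t - a) ⟨by linarith, by linarith [ht.2]⟩
          simp only
          rw [hy]
          push_cast
          ring
      have hSS : (∫ t in (0:ℝ)..x, Complex.sin (ρ * t) * (q t * y (t - a)))
          = ∫ t in (0:ℝ)..x, Complex.sin (ρ * t) * (q t * (Complex.sin (ρ * (t - a)) / ρ)) := by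
        apply intervalIntegral.integral_congr
        intro t ht
        rw [uIcc_of_le h0x] at ht
        by_cases hta : t ≤ a
        · simp [hq0 t ⟨ht.1, hta⟩]
        · push_neg at hta
          have hy := S1 (t - a) ⟨by linarith, by linarith [ht.2]⟩
          simp only
          rw [hy]
          push_cast
          ring
      rw [hCC, hSS] at h
      have h2 := trig_comb x hxa.le hxπ
      have hkey : ρ * y x = Complex.sin (ρ * (x:ℂ)) + ρ * Y1 a q ρ x := by
        linear_combination h + h2
      field_simp
      linear_combination hkey
  -- final assembly at x = π
  have hπI : π ∈ Icc (0:ℝ) π := ⟨Real.pi_nonneg, le_rfl⟩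
  have h := hV π hπI
  have hiCC : IntervalIntegrable (fun t => Complex.cos (ρ * t) * (q t * y (t - a)))
      volume 0 π :=
    key_ii a ha0.le haπ.le q hq_int hq0 y hyc _ (continuous_cosrho ρ) _
      (fun t _ => rfl) le_rfl le_rfl Real.pi_nonneg
  have hiSS : IntervalIntegrable (fun t => Complex.sin (ρ * t) * (q t * y (t - a)))
      volume 0 π :=
    key_ii a ha0.le haπ.le q hq_int hq0 y hyc _ (continuous_sinrho ρ) _
      (fun t _ => rfl) le_rfl le_rfl Real.pi_nonneg
  have hiC1 : IntervalIntegrable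
      (fun t => Complex.cos (ρ * t) * (q t * (Complex.sin (ρ * (t - a)) / ρ))) volume 0 π :=
    key_ii a ha0.le haπ.le q hq_int hq0 _ hws _ (continuous_cosrho ρ) _
      (fun t _ => by push_cast; ring) le_rfl le_rfl Real.pi_nonneg
  have hiS1 : IntervalIntegrable
      (fun t => Complex.sin (ρ * t) * (q t * (Complex.sin (ρ * (t - a)) / ρ))) volume 0 π :=
    key_ii a ha0.le haπ.le q hq_int hq0 _ hws _ (continuous_sinrho ρ) _
      (fun t _ => by push_cast; ring) le_rfl le_rfl Real.pi_nonneg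
  have hDC := intervalIntegral.integral_sub hiCC hiC1
  have hDS := intervalIntegral.integral_sub hiSS hiS1
  have h2 := trig_comb π haπ.le le_rfl
  -- the remainder integral equals ρ Y2
  have hii2 : ∀ u v : ℝ, 0 ≤ u → v ≤ π → u ≤ v → IntervalIntegrable
      (fun t => Complex.sin (ρ * ((π:ℝ) - t)) / ρ * q t * Y1 a q ρ (t - a)) volume u v := by
    intro u v hu hv huv
    apply key_ii a ha0.le haπ.le q hq_int hq0
      (fun u => y u - Complex.sin (ρ * u) / ρ) (hyc.sub hws)
      (fun t => Complex.sin (ρ * ((π:ℂ) - (t:ℂ))) / ρ) (by fun_prop) _ ?_ hu hv huv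
    intro t ht
    by_cases hta : t ≤ a
    · simp [hq0 t ⟨ht.1.le, hta⟩]
    · push_neg at hta
      have hy := S2 (t - a) (by linarith) (by linarith [ht.2])
      rw [hy]
      push_cast
      ring
  have hR : Complex.sin (ρ * (π:ℝ)) * ((∫ t in (0:ℝ)..π, Complex.cos (ρ * t) * (q t * y (t - a)))
        - ∫ t in (0:ℝ)..π, Complex.cos (ρ * t) * (q t * (Complex.sin (ρ * (t - a)) / ρ)))
      - Complex.cos (ρ * (π:ℝ)) * ((∫ t in (0:ℝ)..π, Complex.sin (ρ * t) * (q t * y (t - a)))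
        - ∫ t in (0:ℝ)..π, Complex.sin (ρ * t) * (q t * (Complex.sin (ρ * (t - a)) / ρ)))
      = ρ * Y2 a q ρ π := by
    rw [← hDC, ← hDS, ← intervalIntegral.integral_const_mul,
      ← intervalIntegral.integral_const_mul,
      ← intervalIntegral.integral_sub ((hiCC.sub hiC1).const_mul _) ((hiSS.sub hiS1).const_mul _)]
    rw [intervalIntegral.integral_congr
      (g := fun t => ρ * (Complex.sin (ρ * ((π:ℝ) - t)) / ρ * q t * Y1 a q ρ (t - a))) ?_]
    · rw [intervalIntegral.integral_const_mul]
      congr 1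
      have z1 : (∫ t in (0:ℝ)..(2*a),
          Complex.sin (ρ * ((π:ℝ) - t)) / ρ * q t * Y1 a q ρ (t - a)) = 0 := by
        rw [intervalIntegral.integral_congr (g := fun _ => (0:ℂ)) ?_]
        · simp
        · intro t ht
          rw [uIcc_of_le (by linarith : (0:ℝ) ≤ 2*a)] at ht
          by_cases hta : t ≤ a
          · simp [hq0 t ⟨ht.1, hta⟩]
          · push_neg at hta
            simp [hY1z (t - a) (by linarith) (by linarith [ht.2])]
      rw [← intervalIntegral.integral_add_adjacent_intervals
        (hii2 0 (2*a) le_rfl (by linarith) (by linarith))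
        (hii2 (2*a) π (by linarith) le_rfl (by linarith)), z1, zero_add, Y2]
    · intro t ht
      rw [uIcc_of_le Real.pi_nonneg] at ht
      by_cases hta : t ≤ a
      · simp [hq0 t ⟨ht.1, hta⟩]
      · push_neg at hta
        have hy := S2 (t - a) (by linarith) (by linarith [ht.2])
        simp only
        rw [hy, show ρ * ((π:ℂ) - (t:ℂ)) = ρ * (π:ℂ) - ρ * (t:ℂ) by ring, Complex.sin_sub]
        push_cast
        field_simp
        ring
  have hfin : ρ * y π = Complex.sin (ρ * (π:ℂ)) + ρ * Y1 a q ρ π + ρ * Y2 a q ρ π := by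
    linear_combination h + h2 + hR
  have hcos : (∫ t in a..π, q t * Complex.cos (ρ * ((π:ℝ) - 2 * t + a)))
      = ∫ t in a..π, q t * Complex.cos (ρ * (2 * t - (π:ℝ) - a)) := by
    apply intervalIntegral.integral_congr
    intro t _
    simp only
    rw [show ρ * (2 * (t:ℂ) - (π:ℂ) - (a:ℂ)) = -(ρ * ((π:ℂ) - 2 * (t:ℂ) + (a:ℂ))) by ring,
      Complex.cos_neg]
  have hY1pi : Y1 a q ρ π = -(Complex.cos (ρ * ((π:ℂ) - (a:ℂ))) / (2 * ρ ^ 2)) * (∫ t in a..π, q t)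
      + (1 / (2 * ρ ^ 2)) * ∫ t in a..π, q t * Complex.cos (ρ * (2 * (t:ℂ) - (π:ℂ) - (a:ℂ))) := by
    rw [Y1, hcos]
  apply mul_left_cancel₀ hρ
  rw [hfin, hY1pi]
  linear_combination (-Complex.sin (ρ * ((π:ℝ):ℂ))) * (mul_inv_cancel₀ hρ)

/-- **Expansion of `Δ₀`.** For `a ∈ [2π/5, π/2)`, `ρ ≠ 0`, `λ = ρ²`:
`Δ₀(λ) = sin(ρπ)/ρ - A₀ cos(ρ(π-a))/(2ρ²) + (1/(2ρ²)) ∫_a^π q(t) cos(ρ(2t-π-a)) dt + Y₂(π, λ)`. -/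
theorem char0_expansion
    (a : ℝ) (ha1 : 2 * π / 5 ≤ a) (ha2 : a < π / 2)
    (q : ℝ → ℂ) (hq_int : IntegrableOn q (Ioc a π))
    (hq0 : ∀ x ∈ Icc (0:ℝ) a, q x = 0)
    (Y : ℂ → ℝ → ℂ) (hY : ∀ lam : ℂ, IsSolution a q lam (Y lam))
    (hYuniq : ∀ (lam : ℂ) (y : ℝ → ℂ), IsSolution a q lam y → EqOn y (Y lam) (Icc 0 π))
    (ρ : ℂ) (hρ : ρ ≠ 0) :
    Y (ρ ^ 2) π = Complex.sin (ρ * π) / ρ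
      - (∫ t in a..π, q t) * Complex.cos (ρ * (π - a)) / (2 * ρ ^ 2)
      + (1 / (2 * ρ ^ 2)) * (∫ t in a..π, q t * Complex.cos (ρ * (2 * t - π - a)))
      + Y2 a q ρ π := by
  obtain ⟨hy1, hy2, hy3, hy4, hy5⟩ := hY (ρ ^ 2)
  have hπ := Real.pi_pos
  exact main_aux a (by linarith) (by linarith) (by linarith) q hq_int hq0 ρ hρ (Y (ρ ^ 2))
    hy1 hy2 hy3 hy4 hy5
end
end
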